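/- Along any solution u = (u₁,u₂,u₃) of system (B) on an open interval I, each component does not change sign: for each i ∈ {1,2,3} and t₀ ∈ I, if uᵢ(t₀) > 0 then uᵢ(t) > 0 for all t ∈ I, if uᵢ(t₀) < 0 then uᵢ(t) < 0 for all t ∈ I, and if uᵢ(t₀) = 0 then uᵢ(t) = 0 for all t ∈ I. -/

import Mathlib

theorem systemB_sign_preservation (a b : ℝ) (u : Fin 3 → ℝ → ℝ)
    (h : ∀ i : Fin 3, ∀ t ∈ Set.Ioo a b,
      HasDerivAt (u i) (u i t * (u (i + 1) t - u (i + 2) t)) t) :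
    ∀ i : Fin 3, ∀ t₀ ∈ Set.Ioo a b,
      (0 < u i t₀ → ∀ t ∈ Set.Ioo a b, 0 < u i t) ∧
      (u i t₀ < 0 → ∀ t ∈ Set.Ioo a b, u i t < 0) ∧
      (u i t₀ = 0 → ∀ t ∈ Set.Ioo a b, u i t = 0) := by
  intro i t₀ ht₀
  set c : ℝ → ℝ := fun t => u (i + 1) t - u (i + 2) t with hc
  have hIoo : IsOpen (Set.Ioo a b) := isOpen_Ioo
  have hcont : ContinuousOn c (Set.Ioo a b) := by
    intro t ht
    exact (((h (i + 1) t ht).differentiableAt.continuousAt).sub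
      ((h (i + 2) t ht).differentiableAt.continuousAt)).continuousWithinAt
  set F : ℝ → ℝ := fun t => ∫ s in t₀..t, c s with hF
  have hFderiv : ∀ t ∈ Set.Ioo a b, HasDerivAt F (c t) t := by
    intro t ht
    have hsub : Set.uIcc t₀ t ⊆ Set.Ioo a b := by
      exact Set.ordConnected_Ioo.uIcc_subset ht₀ ht
    have hint : IntervalIntegrable c MeasureTheory.volume t₀ t :=
      (hcont.mono hsub).intervalIntegrable
    exact intervalIntegral.integral_hasDerivAt_right hint
      (hcont.stronglyMeasurableAtFilter hIoo t ht) (hcont.continuousAt (hIoo.mem_nhds ht))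
  set g : ℝ → ℝ := fun t => u i t * Real.exp (-F t) with hg
  have hgderiv : ∀ t ∈ Set.Ioo a b, HasDerivAt g 0 t := by
    intro t ht
    have h1 := h i t ht
    have h2 : HasDerivAt (fun s => Real.exp (-F s)) (Real.exp (-F t) * (-c t)) t := by
      simpa [mul_comm] using ((hFderiv t ht).neg).exp
    have h3 := h1.mul h2
    refine h3.congr_deriv ?_
    simp only [hc]
    ring
  have key : ∀ s t : ℝ, s ∈ Set.Ioo a b → t ∈ Set.Ioo a b → s ≤ t → g t = g s := by
    intro s t hs ht hst
    have hsub : Set.Icc s t ⊆ Set.Ioo a b := Set.Icc_subset_Ioo hs.1 ht.2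
    have hgc : ContinuousOn g (Set.Icc s t) := fun x hx =>
      ((hgderiv x (hsub hx)).differentiableAt.continuousAt).continuousWithinAt
    have := constant_of_has_deriv_right_zero hgc (fun x hx =>
      (hgderiv x (hsub (Set.Ico_subset_Icc_self hx))).hasDerivWithinAt)
    exact this t (Set.right_mem_Icc.2 hst)
  have keyg : ∀ t ∈ Set.Ioo a b, g t = g t₀ := by
    intro t ht
    rcases le_total t₀ t with hle | hle
    · exact key t₀ t ht₀ ht hle
    · exact (key t t₀ ht ht₀ hle).symm
  have hform : ∀ t ∈ Set.Ioo a b, u i t = u i t₀ * Real.exp (F t) := by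
    intro t ht
    have h1 : u i t * Real.exp (-F t) = u i t₀ := by
      have := keyg t ht
      simpa [hg, hF, intervalIntegral.integral_same] using this
    have h2 : Real.exp (-F t) * Real.exp (F t) = 1 := by
      rw [← Real.exp_add]; simp
    calc u i t = u i t * (Real.exp (-F t) * Real.exp (F t)) := by rw [h2]; ring
      _ = (u i t * Real.exp (-F t)) * Real.exp (F t) := by ring
      _ = u i t₀ * Real.exp (F t) := by rw [h1]
  refine ⟨fun hpos t ht => ?_, fun hneg t ht => ?_, fun hzero t ht => ?_⟩
  · rw [hform t ht]; exact mul_pos hpos (Real.exp_pos _)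
  · rw [hform t ht]; exact mul_neg_of_neg_of_pos hneg (Real.exp_pos _)
  · rw [hform t ht, hzero, zero_mul]
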